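/- Let ν ∈ (0,1) with ν ≠ 1/2, and let L be the 2×2 complex matrix with entries L₁₂ = √ν, L₂₁ = √(1−ν), and L₁₁ = L₂₂ = 0. Then there exist no θ ∈ ℝ and no complex number c such that e^{iθ}·L = c·(e^{iθ}·L)†; equivalently, there are no c ∈ ℂ and θ ∈ ℝ with e^{2iθ}·√ν = c·√(1−ν) and e^{2iθ}·√(1−ν) = c·√ν. In particular, the generator of the corresponding two-level quantum Markov semigroup admits no thermodynamically consistent special representation. -/

import Mathlib

open Matrix BigOperators

lemma aux_no_tc (x y : ℝ) (hx : 0 < x) (hy : 0 < y) (hne : x ≠ y)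
    (e c : ℂ) (he : ‖e‖ = 1)
    (h1 : e * (x : ℂ) = c * (y : ℂ)) (h2 : e * (y : ℂ) = c * (x : ℂ)) : False := by
  set t := ‖c‖ with ht
  have ht0 : 0 ≤ t := norm_nonneg c
  have a1 : x = t * y := by
    have := congrArg norm h1
    simpa [norm_mul, he, Complex.norm_real, Real.norm_eq_abs, abs_of_pos hx, abs_of_pos hy] using this
  have a2 : y = t * x := by
    have := congrArg norm h2
    simpa [norm_mul, he, Complex.norm_real, Real.norm_eq_abs, abs_of_pos hx, abs_of_pos hy] using this
  have hx2 : t * t * x = x := by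
    nth_rewrite 2 [a1]; rw [a2]; ring
  have htt : t * t = 1 := by
    have := mul_right_cancel₀ hx.ne' (hx2.trans (one_mul x).symm)
    simpa using this
  have hfac : (t - 1) * (t + 1) = 0 := by ring_nf; linarith
  rcases mul_eq_zero.mp hfac with h | h
  · have : t = 1 := by linarith
    apply hne
    rw [a1, this, one_mul]
  · linarith

/-- Example of Section 3: for the two-level jump operator `L = √ν σ₊ + √(1−ν) σ₋` with
`ν ∈ (0,1)`, `ν ≠ 1/2`, no special representation `e^{iθ}L` satisfies the thermodynamic
consistency relation `e^{iθ}L = c·(e^{iθ}L)†`; equivalently, there are no `c ∈ ℂ`, `θ ∈ ℝ`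
with `e^{2iθ}√ν = c√(1−ν)` and `e^{2iθ}√(1−ν) = c√ν`. -/
theorem two_level_no_tc_representation
    (ν : ℝ) (h0 : 0 < ν) (h1 : ν < 1) (hν : ν ≠ 1 / 2) :
    (¬ ∃ (θ : ℝ) (c : ℂ),
        Complex.exp ((θ : ℂ) * Complex.I) •
            !![(0 : ℂ), (Real.sqrt ν : ℂ); (Real.sqrt (1 - ν) : ℂ), 0] =
          c • (Complex.exp ((θ : ℂ) * Complex.I) •
            !![(0 : ℂ), (Real.sqrt ν : ℂ); (Real.sqrt (1 - ν) : ℂ), 0])ᴴ) ∧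
    (¬ ∃ (θ : ℝ) (c : ℂ),
        Complex.exp (2 * (θ : ℂ) * Complex.I) * (Real.sqrt ν : ℂ) = c * (Real.sqrt (1 - ν) : ℂ) ∧
        Complex.exp (2 * (θ : ℂ) * Complex.I) * (Real.sqrt (1 - ν) : ℂ) = c * (Real.sqrt ν : ℂ)) := by
  have hx : 0 < Real.sqrt ν := Real.sqrt_pos.mpr h0
  have hy : 0 < Real.sqrt (1 - ν) := Real.sqrt_pos.mpr (by linarith)
  have hne : Real.sqrt ν ≠ Real.sqrt (1 - ν) := by
    intro h
    have := (Real.sqrt_inj h0.le (by linarith)).mp h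
    exact hν (by linarith)
  constructor
  · rintro ⟨θ, c, h⟩
    have h01 := congrFun (congrFun h 0) 1
    have h10 := congrFun (congrFun h 1) 0
    simp [Matrix.smul_apply, Matrix.conjTranspose_apply, _root_.map_mul] at h01 h10
    exact aux_no_tc _ _ hx hy hne (Complex.exp ((θ:ℂ) * Complex.I)) (c * (starRingEnd ℂ) (Complex.exp ((θ:ℂ) * Complex.I)))
      (by simp [Complex.norm_exp]) (by rw [h01]; ring) (by rw [h10]; ring)
  · rintro ⟨θ, c, hc1, hc2⟩
    exact aux_no_tc _ _ hx hy hne (Complex.exp (2 * (θ:ℂ) * Complex.I)) c (by simp [Complex.norm_exp]) hc1 hc2
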